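/- Interior case of the structural theorem: Fix α ∈ (0,1) and an admissible chamber Γ with quantile count vector k := k_{α,Γ}, and let W^{(k)} ∈ W̄ be the shadow-Kelly point W^{(k)}_i = k_i/(n q_i). If W^{(k)} ∈ cl(F_Γ), then W^{(k)} maximizes W ↦ W^{k} over cl(F_Γ); consequently Q_{n,α}(W) ≤ Q_{n,α}(W^{(k)}) = (W^{(k)})^{k} for every W ∈ cl(F_Γ). -/

import Mathlib

open Finset Filter Topology
open scoped Classical

noncomputable section

/-- The closed Arrow–Debreu wealth simplex `{W ∈ [0,∞)^m : Σ q_i W_i = 1}`. -/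
def closedSimplex {m : ℕ} (q : Fin m → ℝ) : Set (Fin m → ℝ) :=
  {W | (∀ i, 0 ≤ W i) ∧ ∑ i, q i * W i = 1}

/-- The open Arrow–Debreu wealth simplex `{W ∈ (0,∞)^m : Σ q_i W_i = 1}`. -/
def openSimplex {m : ℕ} (q : Fin m → ℝ) : Set (Fin m → ℝ) :=
  {W | (∀ i, 0 < W i) ∧ ∑ i, q i * W i = 1}

/-- The finite set `C_n` of count vectors `k : Fin m → ℕ` with `Σ k_i = n`. -/
def countFinset (m n : ℕ) : Finset (Fin m → ℕ) :=
  (Fintype.piFinset fun _ : Fin m => Finset.range (n + 1)).filter fun k => ∑ i, k i = n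

/-- The monomial `W^k := Π_i W_i^{k_i}` (with the convention `0^0 = 1`). -/
def mono {m : ℕ} (W : Fin m → ℝ) (k : Fin m → ℕ) : ℝ := ∏ i, W i ^ k i

/-- The multinomial probability `π_k = (n!/(k_1!⋯k_m!))·Π p_i^{k_i}`. -/
def countProb {m : ℕ} (p : Fin m → ℝ) (k : Fin m → ℕ) : ℝ :=
  (Nat.multinomial Finset.univ k : ℝ) * ∏ i, p i ^ k i

/-- The upper α-quantile of terminal wealth
`Q_{n,α}(W) := sup{t ∈ [0,∞) : Σ_{k ∈ C_n : W^k ≥ t} π_k ≥ α}`. -/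
def upperQuantile {m : ℕ} (p : Fin m → ℝ) (n : ℕ) (α : ℝ) (W : Fin m → ℝ) : ℝ :=
  sSup {t : ℝ | 0 ≤ t ∧
    α ≤ ∑ k ∈ countFinset m n, if t ≤ mono W k then countProb p k else 0}

/-- The union of the count hyperplanes `H_{k,ℓ}`. -/
def hyperUnion (m n : ℕ) : Set (Fin m → ℝ) :=
  {u | ∃ k ∈ countFinset m n, ∃ l ∈ countFinset m n,
    k ≠ l ∧ ∑ i, ((k i : ℝ) - (l i : ℝ)) * u i = 0}

/-- A chamber is a connected component of the complement of the count arrangement. -/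
def IsChamber (m n : ℕ) (Γ : Set (Fin m → ℝ)) : Prop :=
  ∃ u ∈ (hyperUnion m n)ᶜ, Γ = connectedComponentIn (hyperUnion m n)ᶜ u

/-- `F_Γ := {W ∈ W⁺⁺ : log W ∈ Γ}`. -/
def chamberFace {m : ℕ} (q : Fin m → ℝ) (Γ : Set (Fin m → ℝ)) : Set (Fin m → ℝ) :=
  {W | W ∈ openSimplex q ∧ (fun i => Real.log (W i)) ∈ Γ}

/-- `k` is the quantile count vector `k_{α,Γ}` of the chamber `Γ`: the tail mass at `W^k`
is at least `α`, while the strict tail mass is below `α`, for every `W ∈ F_Γ`. -/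
def IsQuantileVec {m : ℕ} (p q : Fin m → ℝ) (n : ℕ) (α : ℝ) (Γ : Set (Fin m → ℝ))
    (k : Fin m → ℕ) : Prop :=
  k ∈ countFinset m n ∧
  ∀ W ∈ chamberFace q Γ,
    α ≤ (∑ l ∈ countFinset m n, if mono W k ≤ mono W l then countProb p l else 0) ∧
    (∑ l ∈ countFinset m n, if mono W k < mono W l then countProb p l else 0) < α

lemma mono_nonneg {m : ℕ} {W : Fin m → ℝ} (hW : ∀ i, 0 ≤ W i) (k : Fin m → ℕ) : 0 ≤ mono W k :=
  Finset.prod_nonneg fun i _ => pow_nonneg (hW i) _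

lemma mono_pos {m : ℕ} {W : Fin m → ℝ} (hW : ∀ i, 0 < W i) (k : Fin m → ℕ) : 0 < mono W k :=
  Finset.prod_pos fun i _ => pow_pos (hW i) _

lemma continuous_mono {m : ℕ} (k : Fin m → ℕ) : Continuous fun W : Fin m → ℝ => mono W k :=
  continuous_finset_prod _ fun i _ => (continuous_apply i).pow _

lemma countProb_nonneg {m : ℕ} {p : Fin m → ℝ} (hp : ∀ i, 0 ≤ p i) (k : Fin m → ℕ) :
    0 ≤ countProb p k :=
  mul_nonneg (Nat.cast_nonneg _) (Finset.prod_nonneg fun i _ => pow_nonneg (hp i) _)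

lemma log_mono {m : ℕ} {W : Fin m → ℝ} (hW : ∀ i, 0 < W i) (k : Fin m → ℕ) :
    Real.log (mono W k) = ∑ i, (k i : ℝ) * Real.log (W i) := by
  rw [mono, Real.log_prod (fun i _ => (pow_pos (hW i) _).ne')]
  simp [Real.log_pow]

lemma mono_lt_iff {m : ℕ} {W : Fin m → ℝ} (hW : ∀ i, 0 < W i) (k l : Fin m → ℕ) :
    mono W k < mono W l ↔ 0 < ∑ i, ((l i : ℝ) - k i) * Real.log (W i) := by
  rw [← Real.log_lt_log_iff (mono_pos hW k) (mono_pos hW l), log_mono hW, log_mono hW, ← sub_pos]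
  constructor <;> intro h <;> [skip; skip] <;>
    · convert h using 1
      rw [← Finset.sum_sub_distrib]
      exact Finset.sum_congr rfl fun i _ => by ring

lemma amgm {m n : ℕ} (hn : 1 ≤ n) {q : Fin m → ℝ} (hq : ∀ i, 0 < q i)
    {k : Fin m → ℕ} (hksum : ∑ i, k i = n) {W : Fin m → ℝ}
    (hW : ∀ i, 0 ≤ W i) (hW1 : ∑ i, q i * W i = 1) :
    mono W k ≤ mono (fun i => (k i : ℝ) / (n * q i)) k := by
  classical
  have hn0 : (0:ℝ) < n := by exact_mod_cast Nat.lt_of_lt_of_le Nat.zero_lt_one hn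
  set z : Fin m → ℝ := fun i => if k i = 0 then 0 else n * q i * W i / k i with hz
  have hznn : ∀ i, 0 ≤ z i := by
    intro i; simp only [hz]; split_ifs with h
    · exact le_rfl
    · have h1 := hq i; have h2 := hW i; positivity
  have hwsum : ∑ i, (k i : ℝ) / n = 1 := by
    rw [← Finset.sum_div, ← Nat.cast_sum, hksum, div_self hn0.ne']
  have hgm : ∏ i, z i ^ ((k i : ℝ)/n) ≤ ∑ i, ((k i : ℝ)/n) * z i :=
    Real.geom_mean_le_arith_mean_weighted Finset.univ _ _ (fun i _ => by positivity)
      hwsum (fun i _ => hznn i)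
  have hsum_le : ∑ i, ((k i : ℝ)/n) * z i ≤ 1 := by
    rw [← hW1]
    apply Finset.sum_le_sum
    intro i _
    simp only [hz]
    split_ifs with h
    · have h1 := hq i; have h2 := hW i; simp; positivity
    · have hk0 : ((k i : ℝ)) ≠ 0 := Nat.cast_ne_zero.mpr h
      apply le_of_eq
      field_simp
  have hG1 : ∏ i, z i ^ ((k i : ℝ)/n) ≤ 1 := hgm.trans hsum_le
  have hGnn : 0 ≤ ∏ i, z i ^ ((k i : ℝ)/n) :=
    Finset.prod_nonneg fun i _ => Real.rpow_nonneg (hznn i) _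
  have hPn : ∏ i, z i ^ k i ≤ 1 := by
    calc ∏ i, z i ^ k i = (∏ i, z i ^ ((k i:ℝ)/n)) ^ n := by
          rw [← Finset.prod_pow]
          apply Finset.prod_congr rfl
          intro i _
          rw [← Real.rpow_natCast (z i ^ ((k i:ℝ)/n)) n, ← Real.rpow_mul (hznn i),
              div_mul_cancel₀ _ hn0.ne', Real.rpow_natCast]
    _ ≤ 1 := pow_le_one₀ hGnn hG1
  have hfac : mono W k = (∏ i, z i ^ k i) * mono (fun i => (k i:ℝ)/(n*q i)) k := by
    rw [mono, mono, ← Finset.prod_mul_distrib]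
    apply Finset.prod_congr rfl
    intro i _
    by_cases h : k i = 0
    · simp [h]
    · rw [← mul_pow]
      congr 1
      simp only [hz, if_neg h]
      have hk0 : ((k i:ℝ)) ≠ 0 := Nat.cast_ne_zero.mpr h
      field_simp [hn0.ne', (hq i).ne']
  have hT0 : 0 ≤ mono (fun i => (k i:ℝ)/(n*q i)) k := by
    apply mono_nonneg
    intro i
    have := hq i
    positivity
  calc mono W k = (∏ i, z i ^ k i) * mono (fun i => (k i:ℝ)/(n*q i)) k := hfac
    _ ≤ 1 * mono (fun i => (k i:ℝ)/(n*q i)) k := mul_le_mul_of_nonneg_right hPn hT0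
    _ = _ := one_mul _

lemma sign_prop {m n : ℕ} {Γ : Set (Fin m → ℝ)} (hΓ : IsChamber m n Γ)
    {k l : Fin m → ℕ} (hkC : k ∈ countFinset m n) (hlC : l ∈ countFinset m n) (hkl : k ≠ l)
    {u v : Fin m → ℝ} (hu : u ∈ Γ) (hv : v ∈ Γ)
    (h : 0 < ∑ i, ((l i : ℝ) - k i) * u i) : 0 < ∑ i, ((l i : ℝ) - k i) * v i := by
  obtain ⟨u₀, hu₀, rfl⟩ := hΓ
  set f : (Fin m → ℝ) → ℝ := fun x => ∑ i, ((l i : ℝ) - k i) * x i with hf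
  have hfc : Continuous f := by
    apply continuous_finset_sum
    intro i _
    exact continuous_const.mul (continuous_apply i)
  have hne : ∀ x ∈ connectedComponentIn (hyperUnion m n)ᶜ u₀, f x ≠ 0 := by
    intro x hx h0
    exact (connectedComponentIn_subset _ _ hx) ⟨l, hlC, k, hkC, hkl.symm, h0⟩
  by_contra hneg
  push_neg at hneg
  have h0lt : f v < 0 := lt_of_le_of_ne hneg (hne v hv)
  have hiv := isPreconnected_connectedComponentIn.intermediate_value hv hu hfc.continuousOn
  obtain ⟨x, hx, hx0⟩ := hiv ⟨h0lt.le, h.le⟩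
  exact hne x hx hx0

/-- **Interior case of the structural theorem.** If the shadow-Kelly point of the
quantile count vector `k = k_{α,Γ}` lies in the closure of `F_Γ`, then it maximizes
`W ↦ W^k` there, and consequently it maximizes the upper `α`-quantile on `cl(F_Γ)`,
its quantile being `(W^{(k)})^k`. -/
theorem interior_case (m n : ℕ) (hm : 2 ≤ m) (hn : 1 ≤ n)
    (p q : Fin m → ℝ) (hp : ∀ i, 0 < p i ∧ p i < 1) (hpsum : ∑ i, p i = 1)
    (hq : ∀ i, 0 < q i) (α : ℝ) (hα : 0 < α ∧ α < 1)
    (Γ : Set (Fin m → ℝ)) (hΓ : IsChamber m n Γ)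
    (hadm : (chamberFace q Γ).Nonempty)
    (k : Fin m → ℕ) (hk : IsQuantileVec p q n α Γ k)
    (hWk : (fun i => (k i : ℝ) / (n * q i)) ∈ closure (chamberFace q Γ)) :
    (∀ W ∈ closure (chamberFace q Γ),
      mono W k ≤ mono (fun i => (k i : ℝ) / (n * q i)) k) ∧
    upperQuantile p n α (fun i => (k i : ℝ) / (n * q i)) =
      mono (fun i => (k i : ℝ) / (n * q i)) k ∧
    ∀ W ∈ closure (chamberFace q Γ),
      upperQuantile p n α W ≤ upperQuantile p n α (fun i => (k i : ℝ) / (n * q i)) := by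
  classical
  obtain ⟨W₀, hW₀⟩ := hadm
  set Wk : Fin m → ℝ := fun i => (k i : ℝ) / (n * q i) with hWkdef
  have hkC := hk.1
  have hksum : ∑ i, k i = n := (Finset.mem_filter.mp hkC).2
  have hπ : ∀ l, 0 ≤ countProb p l := countProb_nonneg (fun i => (hp i).1.le)
  -- closure of chamberFace sits inside the closed simplex
  have hclosed : IsClosed (closedSimplex q) := by
    have h1 : IsClosed {W : Fin m → ℝ | ∀ i, 0 ≤ W i} := by
      have : {W : Fin m → ℝ | ∀ i, 0 ≤ W i} = ⋂ i, {W | 0 ≤ W i} := by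
        ext W; simp [Set.mem_iInter]
      rw [this]
      exact isClosed_iInter fun i => isClosed_le continuous_const (continuous_apply i)
    have h2 : IsClosed {W : Fin m → ℝ | ∑ i, q i * W i = 1} :=
      isClosed_eq (continuous_finset_sum _ fun i _ => continuous_const.mul (continuous_apply i))
        continuous_const
    exact h1.inter h2
  have hsub : closure (chamberFace q Γ) ⊆ closedSimplex q := by
    apply closure_minimal _ hclosed
    intro W hW
    exact ⟨fun i => (hW.1.1 i).le, hW.1.2⟩
  have part1 : ∀ W ∈ closure (chamberFace q Γ), mono W k ≤ mono Wk k := by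
    intro W hW
    exact amgm hn hq hksum (hsub hW).1 (hsub hW).2
  -- chamber ordering: dichotomy for l ≠ k
  have hdich : ∀ l ∈ countFinset m n, l ≠ k →
      (∀ W ∈ chamberFace q Γ, mono W k < mono W l) ∨
      (∀ W ∈ chamberFace q Γ, mono W l < mono W k) := by
    intro l hlC hlk
    have hne0 : mono W₀ k ≠ mono W₀ l := by
      intro h
      obtain ⟨u₀, hu₀, hΓeq⟩ := hΓ
      have hmem : (fun i => Real.log (W₀ i)) ∈ (hyperUnion m n)ᶜ :=
        connectedComponentIn_subset _ _ (hΓeq ▸ hW₀.2)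
      apply hmem
      refine ⟨l, hlC, k, hkC, hlk, ?_⟩
      have hl := log_mono hW₀.1.1 l
      have hkk := log_mono hW₀.1.1 k
      have : ∑ i, (l i : ℝ) * Real.log (W₀ i) = ∑ i, (k i : ℝ) * Real.log (W₀ i) := by
        rw [← hl, ← hkk, h]
      calc ∑ i, ((l i : ℝ) - k i) * Real.log (W₀ i)
          = ∑ i, ((l i : ℝ) * Real.log (W₀ i) - (k i : ℝ) * Real.log (W₀ i)) :=
            Finset.sum_congr rfl fun i _ => by ring
        _ = 0 := by rw [Finset.sum_sub_distrib, this, sub_self]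
    rcases lt_or_gt_of_ne hne0 with h | h
    · left
      intro W hW
      rw [mono_lt_iff hW.1.1]
      exact sign_prop hΓ hkC hlC hlk.symm hW₀.2 hW.2 ((mono_lt_iff hW₀.1.1 k l).mp h)
    · right
      intro W hW
      rw [mono_lt_iff hW.1.1]
      exact sign_prop hΓ hlC hkC hlk hW₀.2 hW.2 ((mono_lt_iff hW₀.1.1 l k).mp h)
  -- closure versions of the order
  have hcl_le : ∀ l ∈ countFinset m n, mono W₀ k ≤ mono W₀ l →
      ∀ W ∈ closure (chamberFace q Γ), mono W k ≤ mono W l := by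
    intro l hlC hle W hW
    by_cases hlk : l = k
    · subst hlk; exact le_rfl
    have hall : ∀ W' ∈ chamberFace q Γ, mono W' k ≤ mono W' l := by
      rcases hdich l hlC hlk with h | h
      · exact fun W' hW' => (h W' hW').le
      · exact absurd hle (not_le.mpr (h W₀ hW₀))
    exact closure_minimal hall (isClosed_le (continuous_mono k) (continuous_mono l)) hW
  have hcl_ge : ∀ l ∈ countFinset m n, ¬ mono W₀ k ≤ mono W₀ l →
      ∀ W ∈ closure (chamberFace q Γ), mono W l ≤ mono W k := by
    intro l hlC hnle W hW
    have hlk : l ≠ k := by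
      intro h; subst h; exact hnle le_rfl
    have hall : ∀ W' ∈ chamberFace q Γ, mono W' l ≤ mono W' k := by
      rcases hdich l hlC hlk with h | h
      · exact absurd (h W₀ hW₀).le hnle
      · exact fun W' hW' => (h W' hW').le
    exact closure_minimal hall (isClosed_le (continuous_mono l) (continuous_mono k)) hW
  obtain ⟨hA, hB⟩ := hk.2 W₀ hW₀
  have hT0 : 0 ≤ mono Wk k := by
    apply mono_nonneg
    intro i
    have := hq i
    positivity
  -- the strict dichotomy at W₀ implies ¬(k<l at W₀) ↔ (l=k ∨ ¬(k≤l at W₀))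
  have hnotlt : ∀ l ∈ countFinset m n, ¬ mono W₀ k < mono W₀ l → l ≠ k →
      ¬ mono W₀ k ≤ mono W₀ l := by
    intro l hlC hnlt hlk hle
    rcases hdich l hlC hlk with h | h
    · exact hnlt (h W₀ hW₀)
    · exact absurd hle (not_le.mpr (h W₀ hW₀))
  -- membership of T in the quantile set of Wk
  have hmemT : α ≤ ∑ l ∈ countFinset m n,
      if mono Wk k ≤ mono Wk l then countProb p l else 0 := by
    refine hA.trans (Finset.sum_le_sum fun l hl => ?_)
    split_ifs with h1 h2
    · exact le_rfl
    · exact absurd (hcl_le l hl h1 Wk hWk) h2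
    · exact hπ l
    · exact le_rfl
  -- upper bound: any t in the quantile set of Wk is ≤ T
  have hub : ∀ t ∈ {t : ℝ | 0 ≤ t ∧ α ≤ ∑ l ∈ countFinset m n,
      if t ≤ mono Wk l then countProb p l else 0}, t ≤ mono Wk k := by
    intro t ht
    by_contra hgt
    push_neg at hgt
    have hle : (∑ l ∈ countFinset m n, if t ≤ mono Wk l then countProb p l else 0)
        ≤ ∑ l ∈ countFinset m n, if mono W₀ k < mono W₀ l then countProb p l else 0 := by
      apply Finset.sum_le_sum
      intro l hl
      split_ifs with h1 h2
      · exact le_rfl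
      · exfalso
        by_cases hlk : l = k
        · subst hlk; exact absurd h1 (not_le.mpr hgt)
        · have := hcl_ge l hl (hnotlt l hl h2 hlk) Wk hWk
          exact absurd (h1.trans this) (not_le.mpr hgt)
      · exact hπ l
      · exact le_rfl
    linarith [ht.2, hB]
  have part2 : upperQuantile p n α Wk = mono Wk k := by
    apply le_antisymm
    · exact Real.sSup_le hub hT0
    · exact le_csSup ⟨mono Wk k, hub⟩ ⟨hT0, hmemT⟩
  refine ⟨part1, part2, ?_⟩
  intro W hW
  rw [part2]
  apply Real.sSup_le _ hT0
  intro t ht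
  by_contra hgt
  push_neg at hgt
  have hle : (∑ l ∈ countFinset m n, if t ≤ mono W l then countProb p l else 0)
      ≤ ∑ l ∈ countFinset m n, if mono W₀ k < mono W₀ l then countProb p l else 0 := by
    apply Finset.sum_le_sum
    intro l hl
    split_ifs with h1 h2
    · exact le_rfl
    · exfalso
      by_cases hlk : l = k
      · subst hlk
        exact absurd (h1.trans (part1 W hW)) (not_le.mpr hgt)
      · have h3 := hcl_ge l hl (hnotlt l hl h2 hlk) W hW
        exact absurd ((h1.trans h3).trans (part1 W hW)) (not_le.mpr hgt)
    · exact hπ l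
    · exact le_rfl
  linarith [ht.2, hB]
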